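/- In the generalized eigenvalue setting below, let ξ > 0, let f : ℝ^N → ℝ, and let u⋆ ∈ ℝ^N be a global minimizer of u ↦ f(u) + ξ‖u‖_A². Let L⋆ ≥ 0 satisfy |f(u) − f(u')| ≤ L⋆‖u − u'‖_M for all u, u' with ‖u‖_M ≤ ‖u⋆‖_M and ‖u'‖_M ≤ ‖u⋆‖_M. If λ_{m+1} > 0, then ‖u⋆ − P_W u⋆‖_A ≤ L⋆/(ξ·√(λ_{m+1})) and ‖u⋆ − P_W u⋆‖_M ≤ L⋆/(ξ·λ_{m+1}). -/

import Mathlib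

open Matrix

section aux
variable {N : ℕ}

lemma dot_symm (M : Matrix (Fin N) (Fin N) ℝ) (hs : M.IsSymm) (v w : Fin N → ℝ) :
    v ⬝ᵥ M.mulVec w = w ⬝ᵥ M.mulVec v := by
  rw [dotProduct_mulVec, ← mulVec_transpose, hs.eq, dotProduct_comm]

lemma sum_dot {ι : Type*} (s : Finset ι) (v : ι → (Fin N → ℝ)) (w : Fin N → ℝ) :
    (∑ i ∈ s, v i) ⬝ᵥ w = ∑ i ∈ s, v i ⬝ᵥ w := by
  induction s using Finset.cons_induction with
  | empty => simp
  | cons a s ha ih => simp [Finset.sum_cons, add_dotProduct, ih]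

end aux

/-- In the generalized eigenvalue setting (M symmetric positive definite, A symmetric
positive semidefinite, `φᵢᵀ M φⱼ = δᵢⱼ`, `A φᵢ = λᵢ M φᵢ`, `0 ≤ λ₁ ≤ … ≤ λ_N`,
`W = span(φ₁,…,φ_m)`, `P` the M-orthogonal projection onto `W`), if `u⋆` is a global
minimizer of `u ↦ f u + ξ‖u‖_A²`, `L⋆` is a Lipschitz constant for `f` on the
`‖·‖_M`-ball of radius `‖u⋆‖_M`, and `λ_{m+1} > 0`, then
`‖u⋆ - P u⋆‖_A ≤ L⋆/(ξ √λ_{m+1})` and `‖u⋆ - P u⋆‖_M ≤ L⋆/(ξ λ_{m+1})`. -/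
theorem truncated_basis_projection_bounds
    (N : ℕ) (hN : 1 ≤ N)
    (M A : Matrix (Fin N) (Fin N) ℝ)
    (hMsymm : M.IsSymm) (hAsymm : A.IsSymm)
    (hMpd : M.PosDef) (hApsd : A.PosSemidef)
    (φ : Fin N → (Fin N → ℝ)) (lam : Fin N → ℝ)
    (hortho : ∀ i j, φ i ⬝ᵥ M.mulVec (φ j) = if i = j then 1 else 0)
    (heig : ∀ i, A.mulVec (φ i) = lam i • M.mulVec (φ i))
    (hlam_nonneg : ∀ i, 0 ≤ lam i)
    (hlam_mono : Monotone lam)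
    (m : ℕ) (hm : 1 ≤ m) (hmN : m < N)
    (W : Submodule ℝ (Fin N → ℝ))
    (hW : W = Submodule.span ℝ {w : Fin N → ℝ | ∃ i : Fin N, (i : ℕ) < m ∧ w = φ i})
    (P : (Fin N → ℝ) → (Fin N → ℝ))
    (hP_mem : ∀ u, P u ∈ W)
    (hP_orth : ∀ u, ∀ w ∈ W, (u - P u) ⬝ᵥ M.mulVec w = 0)
    (ξ : ℝ) (hξ : 0 < ξ)
    (f : (Fin N → ℝ) → ℝ)
    (ustar : Fin N → ℝ)
    (hmin : ∀ u, f ustar + ξ * (ustar ⬝ᵥ A.mulVec ustar) ≤ f u + ξ * (u ⬝ᵥ A.mulVec u))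
    (Lstar : ℝ) (hLstar : 0 ≤ Lstar)
    (hLip : ∀ u u' : Fin N → ℝ,
      Real.sqrt (u ⬝ᵥ M.mulVec u) ≤ Real.sqrt (ustar ⬝ᵥ M.mulVec ustar) →
      Real.sqrt (u' ⬝ᵥ M.mulVec u') ≤ Real.sqrt (ustar ⬝ᵥ M.mulVec ustar) →
      |f u - f u'| ≤ Lstar * Real.sqrt ((u - u') ⬝ᵥ M.mulVec (u - u')))
    (hlam_pos : 0 < lam ⟨m, hmN⟩) :
    Real.sqrt ((ustar - P ustar) ⬝ᵥ A.mulVec (ustar - P ustar)) ≤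
      Lstar / (ξ * Real.sqrt (lam ⟨m, hmN⟩)) ∧
    Real.sqrt ((ustar - P ustar) ⬝ᵥ M.mulVec (ustar - P ustar)) ≤
      Lstar / (ξ * lam ⟨m, hmN⟩) := by
  have hMs := dot_symm M hMsymm
  have hAs := dot_symm A hAsymm
  set e : Fin N → ℝ := ustar - P ustar with he
  set c : Fin N → ℝ := fun i => φ i ⬝ᵥ M.mulVec e with hc
  -- φ i ∈ W for i < m
  have hφW : ∀ i : Fin N, (i : ℕ) < m → φ i ∈ W := by
    intro i hi
    rw [hW]
    exact Submodule.subset_span ⟨i, hi, rfl⟩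
  -- c vanishes on low indices
  have hc0 : ∀ i : Fin N, (i : ℕ) < m → c i = 0 := by
    intro i hi
    show φ i ⬝ᵥ M.mulVec e = 0
    rw [hMs]
    exact hP_orth ustar (φ i) (hφW i hi)
  -- linear independence and spanning
  have hli : LinearIndependent ℝ φ := by
    rw [Fintype.linearIndependent_iff]
    intro g hg i
    have h1 : (∑ j, g j • φ j) ⬝ᵥ M.mulVec (φ i) = g i := by
      rw [sum_dot]
      simp only [smul_dotProduct, hortho, smul_eq_mul, mul_ite, mul_one, mul_zero]
      simp
    rw [hg] at h1
    simpa using h1.symm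
  have hNN : Nonempty (Fin N) := ⟨⟨0, hN⟩⟩
  have hspan : Submodule.span ℝ (Set.range φ) = ⊤ := by
    have hcard : Fintype.card (Fin N) = Module.finrank ℝ (Fin N → ℝ) := by
      simp [Module.finrank_fin_fun]
    have hb := coe_basisOfLinearIndependentOfCardEqFinrank hli hcard
    have := (basisOfLinearIndependentOfCardEqFinrank hli hcard).span_eq
    rwa [hb] at this
  -- e = ∑ c i • φ i
  have hrep : e = ∑ i, c i • φ i := by
    set d : Fin N → ℝ := e - ∑ i, c i • φ i with hd
    have hdφ : ∀ j, d ⬝ᵥ M.mulVec (φ j) = 0 := by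
      intro j
      rw [hd, sub_dotProduct, sum_dot]
      simp only [smul_dotProduct, hortho, smul_eq_mul, mul_ite, mul_one, mul_zero]
      rw [hMs e (φ j)]
      simp [hc]
    have hdv : ∀ v : Fin N → ℝ, d ⬝ᵥ M.mulVec v = 0 := by
      intro v
      have hv : v ∈ Submodule.span ℝ (Set.range φ) := by rw [hspan]; trivial
      induction hv using Submodule.span_induction with
      | mem x hx => obtain ⟨j, rfl⟩ := hx; exact hdφ j
      | zero => simp
      | add x y _ _ hx hy => rw [mulVec_add, dotProduct_add, hx, hy, add_zero]
      | smul a x _ hx => rw [mulVec_smul, dotProduct_smul, hx, smul_zero]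
    by_contra hne
    have hd0 : d ≠ 0 := fun h => hne (by rwa [hd, sub_eq_zero] at h)
    have := hMpd.dotProduct_mulVec_pos hd0
    simp only [star_trivial] at this
    rw [hdv d] at this
    exact lt_irrefl 0 this
  -- dot of e with M φ i is c i
  have heMφ : ∀ i, e ⬝ᵥ M.mulVec (φ i) = c i := fun i => hMs e (φ i)
  -- ‖e‖_M² = ∑ c i ^2
  have hSM : e ⬝ᵥ M.mulVec e = ∑ i, c i ^ 2 := by
    nth_rewrite 1 [hrep]
    rw [sum_dot]
    refine Finset.sum_congr rfl fun i _ => ?_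
    rw [smul_dotProduct, smul_eq_mul]
    show c i * (φ i ⬝ᵥ M.mulVec e) = c i ^ 2
    ring
  -- ‖e‖_A² = ∑ lam i * c i ^2
  have hSA : e ⬝ᵥ A.mulVec e = ∑ i, lam i * c i ^ 2 := by
    nth_rewrite 1 [hrep]
    rw [sum_dot]
    refine Finset.sum_congr rfl fun i _ => ?_
    rw [smul_dotProduct, smul_eq_mul, hAs (φ i) e, heig i,
      dotProduct_smul, smul_eq_mul, heMφ i]
    ring
  -- eigenvalue lower bound
  have hlow : lam ⟨m, hmN⟩ * (e ⬝ᵥ M.mulVec e) ≤ e ⬝ᵥ A.mulVec e := by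
    rw [hSM, hSA, Finset.mul_sum]
    refine Finset.sum_le_sum fun i _ => ?_
    by_cases hi : (i : ℕ) < m
    · rw [hc0 i hi]; simp
    · have : lam ⟨m, hmN⟩ ≤ lam i := hlam_mono (Fin.le_iff_val_le_val.mpr (Nat.le_of_not_lt hi))
      exact mul_le_mul_of_nonneg_right this (sq_nonneg _)
  -- e is A-orthogonal to W
  have hAW : ∀ w ∈ W, e ⬝ᵥ A.mulVec w = 0 := by
    intro w hw
    rw [hW] at hw
    induction hw using Submodule.span_induction with
    | mem x hx =>
      obtain ⟨i, hi, rfl⟩ := hx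
      rw [heig i, dotProduct_smul, smul_eq_mul, heMφ i, hc0 i hi, mul_zero]
    | zero => simp
    | add x y _ _ hx hy => rw [mulVec_add, dotProduct_add, hx, hy, add_zero]
    | smul a x _ hx => rw [mulVec_smul, dotProduct_smul, hx, smul_zero]
  -- A-Pythagoras: ustar A ustar = Pu A Pu + e A e
  have hApyth : ustar ⬝ᵥ A.mulVec ustar = (P ustar) ⬝ᵥ A.mulVec (P ustar) + e ⬝ᵥ A.mulVec e := by
    have hu : ustar = P ustar + e := by rw [he]; ring
    have h1 : e ⬝ᵥ A.mulVec (P ustar) = 0 := hAW _ (hP_mem ustar)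
    have h2 : (P ustar) ⬝ᵥ A.mulVec e = 0 := by rw [hAs]; exact h1
    conv_lhs => rw [hu]
    rw [add_dotProduct, mulVec_add, dotProduct_add, dotProduct_add, h1, h2]
    ring
  -- M-Pythagoras gives norm bound for P ustar
  have hMpyth : ustar ⬝ᵥ M.mulVec ustar = (P ustar) ⬝ᵥ M.mulVec (P ustar) + e ⬝ᵥ M.mulVec e := by
    have hu : ustar = P ustar + e := by rw [he]; ring
    have h1 : e ⬝ᵥ M.mulVec (P ustar) = 0 := hP_orth ustar _ (hP_mem ustar)
    have h2 : (P ustar) ⬝ᵥ M.mulVec e = 0 := by rw [hMs]; exact h1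
    conv_lhs => rw [hu]
    rw [add_dotProduct, mulVec_add, dotProduct_add, dotProduct_add, h1, h2]
    ring
  have hMnn : ∀ x : Fin N → ℝ, 0 ≤ x ⬝ᵥ M.mulVec x := by
    intro x; have := hMpd.posSemidef.dotProduct_mulVec_nonneg x; simpa using this
  have hAnn : ∀ x : Fin N → ℝ, 0 ≤ x ⬝ᵥ A.mulVec x := by
    intro x; have := hApsd.dotProduct_mulVec_nonneg x; simpa using this
  have hPle : Real.sqrt ((P ustar) ⬝ᵥ M.mulVec (P ustar)) ≤
      Real.sqrt (ustar ⬝ᵥ M.mulVec ustar) := by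
    apply Real.sqrt_le_sqrt
    rw [hMpyth]
    linarith [hMnn e]
  -- key inequality : ξ * ‖e‖_A² ≤ Lstar * ‖e‖_M
  have hkey : ξ * (e ⬝ᵥ A.mulVec e) ≤ Lstar * Real.sqrt (e ⬝ᵥ M.mulVec e) := by
    have h1 := hmin (P ustar)
    have h2 : ξ * (e ⬝ᵥ A.mulVec e) ≤ f (P ustar) - f ustar := by
      have := hApyth
      nlinarith [h1]
    have h3 : |f (P ustar) - f ustar| ≤
        Lstar * Real.sqrt ((P ustar - ustar) ⬝ᵥ M.mulVec (P ustar - ustar)) :=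
      hLip (P ustar) ustar hPle le_rfl
    have h4 : (P ustar - ustar) ⬝ᵥ M.mulVec (P ustar - ustar) = e ⬝ᵥ M.mulVec e := by
      have : P ustar - ustar = -e := by rw [he]; ring
      rw [this, neg_dotProduct, mulVec_neg, dotProduct_neg, neg_neg]
    calc ξ * (e ⬝ᵥ A.mulVec e) ≤ f (P ustar) - f ustar := h2
      _ ≤ |f (P ustar) - f ustar| := le_abs_self _
      _ ≤ Lstar * Real.sqrt (e ⬝ᵥ M.mulVec e) := by rwa [h4] at h3
  -- final algebra
  set SA := e ⬝ᵥ A.mulVec e with hSAdef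
  set SM := e ⬝ᵥ M.mulVec e with hSMdef
  set lm := lam ⟨m, hmN⟩ with hlm
  have hSAnn : 0 ≤ SA := hAnn e
  have hSMnn : 0 ≤ SM := hMnn e
  set a := Real.sqrt SA with ha
  set b := Real.sqrt SM with hb
  have ha2 : a ^ 2 = SA := Real.sq_sqrt hSAnn
  have hb2 : b ^ 2 = SM := Real.sq_sqrt hSMnn
  have hann : 0 ≤ a := Real.sqrt_nonneg _
  have hbnn : 0 ≤ b := Real.sqrt_nonneg _
  have hsl : Real.sqrt lm > 0 := Real.sqrt_pos.mpr hlam_pos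
  have hsl2 : Real.sqrt lm ^ 2 = lm := Real.sq_sqrt hlam_pos.le
  -- a ≥ √lm * b
  have hab : Real.sqrt lm * b ≤ a := by
    rw [hb, ha, ← Real.sqrt_mul hlam_pos.le]
    exact Real.sqrt_le_sqrt hlow
  have hkey' : ξ * a ^ 2 ≤ Lstar * b := by rw [ha2]; exact hkey
  have hlow' : lm * b ^ 2 ≤ a ^ 2 := by rw [hb2, ha2]; exact hlow
  clear_value SA SM lm a b
  clear hkey hlow hSA hSM hSAdef hSMdef ha hb ha2 hb2 hApyth hMpyth hrep heMφ hAW hlm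
  constructor
  · rcases eq_or_lt_of_le hann with h0 | hapos
    · rw [← h0]
      positivity
    · have hk1 : ξ * a ^ 2 * Real.sqrt lm ≤ Lstar * b * Real.sqrt lm :=
        mul_le_mul_of_nonneg_right hkey' hsl.le
      have hk2 : Lstar * (Real.sqrt lm * b) ≤ Lstar * a :=
        mul_le_mul_of_nonneg_left hab hLstar
      have h1' : ξ * a ^ 2 * Real.sqrt lm ≤ Lstar * a := by nlinarith [hk1, hk2]
      have h2 : ξ * a * Real.sqrt lm ≤ Lstar := by
        have h1'' : a * (ξ * a * Real.sqrt lm) ≤ a * Lstar := by nlinarith [h1']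
        exact le_of_mul_le_mul_left h1'' hapos
      rw [le_div_iff₀ (by positivity)]
      nlinarith [h2]
  · rcases eq_or_lt_of_le hbnn with h0 | hbpos
    · rw [← h0]; positivity
    · have hl1 : ξ * (lm * b ^ 2) ≤ ξ * a ^ 2 :=
        mul_le_mul_of_nonneg_left hlow' hξ.le
      have h1 : ξ * (lm * b ^ 2) ≤ Lstar * b := le_trans hl1 hkey'
      have h2 : ξ * lm * b ≤ Lstar := by
        have h1'' : b * (ξ * lm * b) ≤ b * Lstar := by nlinarith [h1]
        exact le_of_mul_le_mul_left h1'' hbpos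
      rw [le_div_iff₀ (by positivity)]
      nlinarith [h2]
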